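/- The limit as x tends to 1 from the left of log(Γ(x+1)) / (log(x^2+1) - log(x+1)) equals 2(1 - γ), where γ is the Euler–Mascheroni constant. -/

import Mathlib

open Real Filter

lemma aux_f : HasDerivAt (fun x : ℝ => Real.log (Real.Gamma (x + 1)))
    (1 - Real.eulerMascheroniConstant) 1 := by
  have h1 : HasDerivAt Real.Gamma (1 - Real.eulerMascheroniConstant) ((1:ℝ) + 1) := by
    have := Real.hasDerivAt_Gamma_nat 1
    convert this using 1
    · simp [harmonic_succ]
      ring
    · push_cast; ring
  have h2 : HasDerivAt (fun x : ℝ => Real.Gamma (x + 1))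
      (1 - Real.eulerMascheroniConstant) 1 := by
    have hi : HasDerivAt (fun x : ℝ => x + 1) 1 1 := (hasDerivAt_id 1).add_const 1
    rw [← mul_one (1 - Real.eulerMascheroniConstant)]
    exact HasDerivAt.comp (h₂ := Real.Gamma) (h := fun x : ℝ => x + 1) 1 h1 hi
  have hG : Real.Gamma ((1:ℝ) + 1) = 1 := by
    rw [show ((1:ℝ)+1) = 2 by norm_num, Real.Gamma_two]
  have h3 := h2.log (by rw [hG]; norm_num)
  simpa [hG] using h3

lemma aux_g : HasDerivAt (fun x : ℝ => Real.log (x^2 + 1) - Real.log (x + 1)) (1/2) 1 := by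
  have h1 : HasDerivAt (fun x : ℝ => x^2 + 1) 2 1 := by
    simpa using (hasDerivAt_pow 2 (1:ℝ)).add_const 1
  have h2 : HasDerivAt (fun x : ℝ => x + 1) 1 1 := (hasDerivAt_id (1:ℝ)).add_const 1
  have := (h1.log (by norm_num)).sub (h2.log (by norm_num))
  norm_num at this
  exact this

theorem stmt_10 :
    Filter.Tendsto
      (fun x : ℝ => Real.log (Real.Gamma (x + 1)) / (Real.log (x^2 + 1) - Real.log (x + 1)))
      (nhdsWithin 1 (Set.Iio 1)) (nhds (2 * (1 - Real.eulerMascheroniConstant))) := by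
  set f := fun x : ℝ => Real.log (Real.Gamma (x + 1))
  set g := fun x : ℝ => Real.log (x^2 + 1) - Real.log (x + 1)
  have hf0 : f 1 = 0 := by
    simp only [f]
    rw [show (1:ℝ)+1 = 2 by norm_num, Real.Gamma_two, Real.log_one]
  have hg0 : g 1 = 0 := by norm_num [g]
  have hle : nhdsWithin (1:ℝ) (Set.Iio 1) ≤ nhdsWithin 1 {(1:ℝ)}ᶜ :=
    nhdsWithin_mono _ (fun x hx => ne_of_lt hx)
  have hfs : Tendsto (slope f 1) (nhdsWithin 1 (Set.Iio 1))
      (nhds (1 - Real.eulerMascheroniConstant)) :=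
    ((hasDerivAt_iff_tendsto_slope.mp aux_f).mono_left hle)
  have hgs : Tendsto (slope g 1) (nhdsWithin 1 (Set.Iio 1)) (nhds (1/2)) :=
    ((hasDerivAt_iff_tendsto_slope.mp aux_g).mono_left hle)
  have h := hfs.div hgs (by norm_num)
  have heq : ∀ x ∈ Set.Iio (1:ℝ), slope f 1 x / slope g 1 x = f x / g x := by
    intro x hx
    have hne : x - 1 ≠ 0 := sub_ne_zero.mpr (ne_of_lt hx)
    rw [slope_def_field, slope_def_field, hf0, hg0, sub_zero, sub_zero]
    rw [div_div_div_eq]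
    rw [mul_comm (x-1) (g x), mul_div_mul_right _ _ hne]
  have := h.congr' (eventually_nhdsWithin_of_forall heq)
  convert this using 2
  field_simp
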